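/- Let L > 0, W > 0, let z ≥ 1 be a natural number, and let ρ > 0. Suppose there exist points a₁,…,a_z ∈ ℝ on the centerline (i.e., disk centers (a_j, 0)) such that the rectangle [0, L] × [−W/2, W/2] ⊆ ⋃_{j=1}^{z} closedBall((a_j, 0), ρ). Then ρ ≥ √((W/2)² + (L/(2z))²). -/

import Mathlib

open Metric

/-- Minimality claim accompanying equation (9) of the paper: among all coverings
of the rectangle `[0, L] × [-W/2, W/2]` by `z` closed disks of a common radius
`ρ` whose centers lie on the centerline (the x-axis), the radius must satisfy
`ρ ≥ √((W/2)² + (L/(2z))²)`. -/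
theorem rectangle_disk_coverage_min_radius
    (L W : ℝ) (hL : 0 < L) (hW : 0 < W) (z : ℕ) (hz : 1 ≤ z)
    (ρ : ℝ) (hρ : 0 < ρ) (a : Fin z → ℝ)
    (hcover : {p : EuclideanSpace ℝ (Fin 2) |
        p 0 ∈ Set.Icc (0 : ℝ) L ∧ p 1 ∈ Set.Icc (-(W / 2)) (W / 2)} ⊆
      ⋃ j : Fin z,
        closedBall ((WithLp.equiv 2 (Fin 2 → ℝ)).symm ![a j, 0]) ρ) :
    ρ ≥ Real.sqrt ((W / 2) ^ 2 + (L / (2 * z)) ^ 2) := by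
  by_contra h
  push_neg at h
  have hz0 : (0:ℝ) < (z:ℝ) := by exact_mod_cast hz
  set d := L / (2 * (z:ℝ)) with hd
  have hd0 : 0 < d := by positivity
  have hX : (0:ℝ) ≤ (W/2)^2 + d^2 := by positivity
  have hρ2 : ρ^2 < (W/2)^2 + d^2 := by
    have h1 := Real.sq_sqrt hX
    nlinarith [Real.sqrt_nonneg ((W/2)^2 + d^2)]
  have key : ∀ i : Fin (2*z+1), ∃ j : Fin z, |(i:ℝ) * d - a j| < d := by
    intro i
    have hxle : (i:ℝ) * d ≤ L := by
      have : (i:ℝ) ≤ 2*z := by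
        have := i.isLt
        exact_mod_cast Nat.lt_succ_iff.mp this
      have h2 : (2*(z:ℝ)) * d = L := by rw [hd]; field_simp
      nlinarith
    have hmem : ((WithLp.equiv 2 (Fin 2 → ℝ)).symm ![(i:ℝ)*d, W/2]) ∈
        {p : EuclideanSpace ℝ (Fin 2) |
          p 0 ∈ Set.Icc (0 : ℝ) L ∧ p 1 ∈ Set.Icc (-(W / 2)) (W / 2)} := by
      constructor
      · simp only [WithLp.equiv_symm_apply, PiLp.toLp_apply, Matrix.cons_val_zero, Set.mem_Icc]
        exact ⟨by positivity, hxle⟩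
      · simp only [WithLp.equiv_symm_apply, PiLp.toLp_apply, Matrix.cons_val_one, Matrix.head_cons, Matrix.cons_val_zero, Set.mem_Icc]
        exact ⟨by linarith, le_refl _⟩
    obtain ⟨j, hj⟩ := Set.mem_iUnion.mp (hcover hmem)
    refine ⟨j, ?_⟩
    have hdist := mem_closedBall.mp hj
    rw [EuclideanSpace.dist_eq] at hdist
    simp only [Fin.sum_univ_two, WithLp.equiv_symm_apply, PiLp.toLp_apply, Matrix.cons_val_zero,
      Matrix.cons_val_one, Matrix.head_cons, Real.dist_eq] at hdist
    have hs : ((i:ℝ)*d - a j)^2 + (W/2 - 0)^2 ≤ ρ^2 := by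
      have h0 := (Real.sqrt_le_iff.mp hdist).2
      nlinarith [sq_abs ((i:ℝ)*d - a j), sq_abs (W/2 - (0:ℝ))]
    have hlt : ((i:ℝ)*d - a j)^2 < d^2 := by nlinarith
    have := abs_lt_of_sq_lt_sq hlt hd0.le
    simpa using this
  choose f hf using key
  have hcard : Fintype.card (Fin z) * 2 < Fintype.card (Fin (2*z+1)) := by
    simp; omega
  obtain ⟨j, hj⟩ := Fintype.exists_lt_card_fiber_of_mul_lt_card f hcard
  obtain ⟨i1, h1, i2, h2, i3, h3, h12, h13, h23⟩ := Finset.two_lt_card.mp hj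
  simp only [Finset.mem_filter] at h1 h2 h3
  have pair : ∀ p q : Fin (2*z+1), f p = j → f q = j → (p:ℕ) < (q:ℕ) + 2 := by
    intro p q hp hq
    have hp' := hf p; have hq' := hf q
    rw [hp] at hp'; rw [hq] at hq'
    have : |(p:ℝ)*d - (q:ℝ)*d| < 2*d := by
      calc |(p:ℝ)*d - (q:ℝ)*d| ≤ |(p:ℝ)*d - a j| + |a j - (q:ℝ)*d| := abs_sub_le _ _ _
        _ < d + d := by rw [abs_sub_comm (a j)]; exact add_lt_add hp' hq'
        _ = 2*d := by ring
    have h2' : |(p:ℝ) - (q:ℝ)| < 2 := by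
      have hm : |(p:ℝ) - (q:ℝ)| * d < 2 * d := by
        calc |(p:ℝ) - (q:ℝ)| * d = |(p:ℝ) - (q:ℝ)| * |d| := by rw [abs_of_pos hd0]
          _ = |(p:ℝ)*d - (q:ℝ)*d| := by rw [← abs_mul]; ring_nf
          _ < 2*d := this
      exact lt_of_mul_lt_mul_right hm hd0.le
    have : (p:ℝ) - (q:ℝ) < 2 := (abs_lt.mp h2').2
    have : (p:ℝ) < (q:ℝ) + 2 := by linarith
    exact_mod_cast this
  have e12 := pair i1 i2 h1.2 h2.2
  have e21 := pair i2 i1 h2.2 h1.2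
  have e13 := pair i1 i3 h1.2 h3.2
  have e31 := pair i3 i1 h3.2 h1.2
  have e23 := pair i2 i3 h2.2 h3.2
  have e32 := pair i3 i2 h3.2 h2.2
  have n12 : (i1:ℕ) ≠ (i2:ℕ) := fun hh => h12 (Fin.ext hh)
  have n13 : (i1:ℕ) ≠ (i3:ℕ) := fun hh => h13 (Fin.ext hh)
  have n23 : (i2:ℕ) ≠ (i3:ℕ) := fun hh => h23 (Fin.ext hh)
  omega
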